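/- Let W be a vector space over ℂ, let A, T : W → W be linear maps, let m ≥ 2, let μ₁, …, μ_m be distinct complex numbers, and suppose that for each l ∈ {1,…,m} there is a nonzero vector φ_l ∈ W with (id + A - μ_l · T) φ_l = 0. If the family (φ₁, …, φ_m) is linearly dependent, then for every μ ∈ ℂ the linear map id + A - μ · T has nontrivial kernel, i.e. there exists a nonzero g ∈ W with (id + A - μ · T) g = 0. -/

import Mathlib

theorem stmt_18 {W : Type*} [AddCommGroup W] [Module ℂ W]
    (A T : W →ₗ[ℂ] W) (m : ℕ) (hm : 2 ≤ m)
    (μ : Fin m → ℂ) (hμ : Function.Injective μ)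
    (φ : Fin m → W) (hφ : ∀ l, φ l ≠ 0)
    (heq : ∀ l, ((LinearMap.id : W →ₗ[ℂ] W) + A - μ l • T) (φ l) = 0)
    (hdep : ¬ LinearIndependent ℂ φ) :
    ∀ μ' : ℂ, ∃ g : W, g ≠ 0 ∧ ((LinearMap.id : W →ₗ[ℂ] W) + A - μ' • T) g = 0 := by
  classical
  have key : ∀ i, φ i + A (φ i) = μ i • T (φ i) := by
    intro i
    have h := heq i
    rw [LinearMap.sub_apply, LinearMap.add_apply, LinearMap.id_apply,
      LinearMap.smul_apply, sub_eq_zero] at h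
    exact h
  intro μ'
  by_cases hcase : ∃ l, μ' = μ l
  · obtain ⟨l, rfl⟩ := hcase
    exact ⟨φ l, hφ l, heq l⟩
  push_neg at hcase
  have hne : ∀ i, μ i - μ' ≠ 0 := fun i => sub_ne_zero.mpr fun h => hcase i h.symm
  have hex : ∃ n, ∃ c : Fin m → ℂ, ((∑ i, c i • φ i = 0) ∧ c ≠ 0) ∧
      (Finset.univ.filter (fun i => c i ≠ 0)).card = n := by
    obtain ⟨c, hsum, i0, hi0⟩ := Fintype.not_linearIndependent_iff.mp hdep
    exact ⟨_, c, ⟨hsum, fun h => hi0 (by simp [h])⟩, rfl⟩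
  obtain ⟨c, ⟨hsum, hc0⟩, hcard⟩ := Nat.find_spec hex
  set n := Nat.find hex with hn
  have hmin : ∀ d : Fin m → ℂ, (∑ i, d i • φ i = 0) →
      (Finset.univ.filter (fun i => d i ≠ 0)).card < n → d = 0 := by
    intro d hd hlt
    by_contra hd0
    exact Nat.find_min hex hlt ⟨d, ⟨hd, hd0⟩, rfl⟩
  set S := Finset.univ.filter (fun i => c i ≠ 0) with hS
  have hSne : S.Nonempty := by
    rcases Function.ne_iff.mp hc0 with ⟨i, hi⟩
    exact ⟨i, by simp only [hS, Finset.mem_filter, Finset.mem_univ, true_and]; simpa using hi⟩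
  have hsumS : ∑ i ∈ S, c i • φ i = 0 := by
    rw [← hsum]
    apply Finset.sum_subset (Finset.subset_univ S)
    intro i _ hiS
    have hci : c i = 0 := by
      by_contra h
      exact hiS (by simp [hS, h])
    rw [hci, zero_smul]
  have hS2 : 1 < S.card := by
    by_contra h
    push_neg at h
    have h1 : S.card = 1 := le_antisymm h (Finset.card_pos.mpr hSne)
    obtain ⟨i0, hi0⟩ := Finset.card_eq_one.mp h1
    have : c i0 • φ i0 = 0 := by
      rw [hi0] at hsumS
      simpa using hsumS
    have hci0 : c i0 ≠ 0 := by
      have : i0 ∈ S := by rw [hi0]; exact Finset.mem_singleton_self i0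
      simpa [hS] using this
    exact hφ i0 (by
      have := smul_eq_zero.mp this
      tauto)
  obtain ⟨l0, hl0, l1, hl1, hll⟩ := Finset.one_lt_card.mp hS2
  have hcl0 : c l0 ≠ 0 := by simpa [hS] using hl0
  have hcl1 : c l1 ≠ 0 := by simpa [hS] using hl1
  set d : Fin m → ℂ := fun i => (μ i - μ')⁻¹ * c i with hd
  set g : W := ∑ i, d i • φ i with hg
  have hdc : ∀ i, d i * (μ i - μ') = c i := by
    intro i
    rw [hd]
    field_simp
    exact mul_div_cancel_left₀ _ (hne i)
  refine ⟨g, ?_, ?_⟩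
  · -- g ≠ 0
    intro hg0
    set e : Fin m → ℂ := fun i => d i - (μ l0 - μ')⁻¹ * c i with he
    have hesum : ∑ i, e i • φ i = 0 := by
      simp only [he, sub_smul, Finset.sum_sub_distrib, mul_smul]
      rw [← hg, hg0, ← Finset.smul_sum, hsum]
      simp
    have hsub : Finset.univ.filter (fun i => e i ≠ 0) ⊆ S.erase l0 := by
      intro i hi
      have hei : e i ≠ 0 := by simpa using hi
      have hci : c i ≠ 0 := by
        intro h
        apply hei
        simp [he, hd, h]
      have hil0 : i ≠ l0 := by
        intro h
        subst h
        apply hei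
        simp [he, hd]
      exact Finset.mem_erase.mpr ⟨hil0, by simp [hS, hci]⟩
    have hlt : (Finset.univ.filter (fun i => e i ≠ 0)).card < n := by
      calc (Finset.univ.filter (fun i => e i ≠ 0)).card
          ≤ (S.erase l0).card := Finset.card_le_card hsub
        _ < S.card := Finset.card_erase_lt_of_mem hl0
        _ = n := hcard
    have he0 := hmin e hesum hlt
    have he1 : e l1 = 0 := by rw [he0]; rfl
    have h := sub_eq_zero.mp he1
    rw [hd] at h
    have hinv : (μ l1 - μ')⁻¹ = (μ l0 - μ')⁻¹ := mul_right_cancel₀ hcl1 h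
    have hsubeq : μ l1 - μ' = μ l0 - μ' := inv_injective hinv
    have : μ l1 = μ l0 := by have := sub_left_inj.mp hsubeq; exact this
    exact hll (hμ this).symm
  · -- kernel equation
    rw [LinearMap.sub_apply, LinearMap.add_apply, LinearMap.id_apply, LinearMap.smul_apply]
    have step : g + A g - μ' • T g = ∑ i, c i • T (φ i) := by
      rw [hg, map_sum, map_sum, Finset.smul_sum, ← Finset.sum_add_distrib,
        ← Finset.sum_sub_distrib]
      refine Finset.sum_congr rfl fun i _ => ?_
      rw [map_smul, map_smul]
      have : d i • φ i + d i • A (φ i) = d i • (μ i • T (φ i)) := by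
        rw [← smul_add, key i]
      rw [this, smul_comm μ' (d i), ← smul_sub, ← sub_smul, smul_smul, hdc i]
    rw [step]
    have : ∑ i, c i • T (φ i) = T (∑ i, c i • φ i) := by
      rw [map_sum]
      exact Finset.sum_congr rfl fun i _ => (map_smul T (c i) (φ i)).symm
    rw [this, hsum, map_zero]
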